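/- Let A be a subring of a ring B. Then the set of x ∈ B such that x^{pⁿ} ∈ A for some n ≥ 0 need not be a ring in general, but if A contains a non-zerodivisor π of B with B = A[1/π] and π^p ∣ p in A, then R = {x ∈ A[1/π] : ∃ n ≥ 0, x^{pⁿ} ∈ A} is a subring of A[1/π], and it is the smallest p-closed subring of A[1/π] containing A. -/

import Mathlib

/-- The set of elements of `A[1/π]` some `pⁿ`-th power of which lies in (the image of) `A`. -/
def pPowerClosure (p : ℕ) {A : Type} [CommRing A] (π : A) : Set (Localization.Away π) :=
  {x | ∃ n : ℕ, x ^ p ^ n ∈ (algebraMap A (Localization.Away π)).range}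

lemma aux_pow_dvd_choose {p : ℕ} (hp : p.Prime) {N i : ℕ} (hi0 : i ≠ 0) (hiN : i ≤ p ^ N) :
    p ^ (N - i.factorization p) ∣ (p ^ N).choose i := by
  set v := i.factorization p with hv
  set m := i / p ^ v with hm'
  have hvd : p ^ v ∣ i := Nat.ordProj_dvd i p
  have hm : ¬ p ∣ m := Nat.not_dvd_ordCompl hp hi0
  have hi' : i = p ^ v * m := (Nat.mul_div_cancel' hvd).symm
  have hvN : v ≤ N := by
    have h1 : p ^ v ≤ p ^ N := le_trans (Nat.le_of_dvd (Nat.pos_of_ne_zero hi0) hvd) hiN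
    exact (Nat.pow_le_pow_iff_right hp.one_lt).mp h1
  have hid : p ^ N * (p ^ N - 1).choose (i - 1) = (p ^ N).choose i * i := by
    have h1 := Nat.add_one_mul_choose_eq (p ^ N - 1) (i - 1)
    have h2 : (p ^ N - 1).succ = p ^ N := Nat.succ_pred_eq_of_pos (Nat.pow_pos (n := N) hp.pos)
    have h3 : (i - 1).succ = i := Nat.succ_pred_eq_of_pos (Nat.pos_of_ne_zero hi0)
    rw [Nat.succ_eq_add_one] at h2 h3
    rwa [h2, h3] at h1
  set t := (p ^ N - 1).choose (i - 1)
  set C := (p ^ N).choose i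
  have key : C * m = p ^ (N - v) * t := by
    have hpv : 0 < p ^ v := Nat.pow_pos (n := v) hp.pos
    apply Nat.eq_of_mul_eq_mul_left hpv
    calc p ^ v * (C * m) = C * (p ^ v * m) := by ring
      _ = C * i := by rw [← hi']
      _ = p ^ N * t := hid.symm
      _ = p ^ v * (p ^ (N - v) * t) := by rw [← mul_assoc, ← pow_add]; congr 2; omega
  have hdvd2 : p ^ (N - v) ∣ C * m := ⟨t, key⟩
  have hcop : Nat.Coprime (p ^ (N - v)) m :=
    Nat.Coprime.pow_left _ ((Nat.Prime.coprime_iff_not_dvd hp).mpr hm)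
  exact (Nat.Coprime.dvd_of_dvd_mul_right hcop) hdvd2

lemma aux_key {L : Type*} [CommRing L] (R : Subring L) (u c x y : L) (hu : u ∈ R) (hc : c ∈ R)
    {p : ℕ} (hp : p.Prime) (hpc : (p : L) = u ^ p * c) (n k : ℕ)
    (hx : x ^ p ^ n ∈ R) (hy : y ^ p ^ n ∈ R)
    (hux : u ^ k * x ∈ R) (huy : u ^ k * y ∈ R) :
    (x + y) ^ p ^ (n + k * p ^ n) ∈ R := by
  set N := n + k * p ^ n with hN
  set M := p ^ N with hM
  have hpn_pos : 0 < p ^ n := Nat.pow_pos (n := n) hp.pos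
  have hnN : p ^ n ∣ M := pow_dvd_pow p (by omega)
  rw [add_pow]
  apply Subring.sum_mem
  intro i hi
  simp only [Finset.mem_range] at hi
  have hiM : i ≤ M := by omega
  set r := i % p ^ n with hr
  set q := i / p ^ n with hq
  have hiqr : i = p ^ n * q + r := by rw [hr, hq]; exact (Nat.div_add_mod i (p ^ n)).symm
  by_cases hr0 : r = 0
  · have hdvdi : p ^ n ∣ i := Nat.dvd_of_mod_eq_zero hr0
    have hdvdj : p ^ n ∣ M - i := Nat.dvd_sub hnN hdvdi
    obtain ⟨a, ha⟩ := hdvdi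
    obtain ⟨b, hb⟩ := hdvdj
    rw [hb, ha, pow_mul, pow_mul]
    exact Subring.mul_mem _ (Subring.mul_mem _ (Subring.pow_mem _ hx a) (Subring.pow_mem _ hy b))
      (natCast_mem R _)
  · set j := M - i with hj'
    set s := j % p ^ n with hs
    set t := j / p ^ n with ht
    have hjts : j = p ^ n * t + s := by rw [hs, ht]; exact (Nat.div_add_mod j (p ^ n)).symm
    have hrlt : r < p ^ n := by rw [hr]; exact Nat.mod_lt _ hpn_pos
    have hslt : s < p ^ n := by rw [hs]; exact Nat.mod_lt _ hpn_pos
    clear_value r q s t j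
    have hij : i + j = M := by rw [hj']; omega
    have hrs : r + s = p ^ n := by
      have h0 : p ^ n ∣ r + s := by
        have h1 : (i + j) % p ^ n = (r + s) % p ^ n := by rw [hr, hs, Nat.add_mod]
        rw [hij] at h1
        have h2 : M % p ^ n = 0 := Nat.mod_eq_zero_of_dvd hnN
        exact Nat.dvd_of_mod_eq_zero (h2 ▸ h1.symm)
      obtain ⟨w, hw⟩ := h0
      rcases w with _ | _ | w
      · omega
      · omega
      · have h2 : p ^ n * 2 ≤ p ^ n * (w + 1 + 1) := Nat.mul_le_mul_left _ (by omega)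
        omega
    -- i ≠ 0 since r ≠ 0
    have hi0 : i ≠ 0 := by omega
    set v := i.factorization p with hv
    have hvn : v < n := by
      by_contra h
      push_neg at h
      have : p ^ n ∣ i := dvd_trans (pow_dvd_pow p h) (Nat.ordProj_dvd i p)
      exact hr0 (by rw [hr]; exact Nat.mod_eq_zero_of_dvd this)
    set e := N - v with he
    have hdC : p ^ e ∣ M.choose i := aux_pow_dvd_choose hp hi0 hiM
    obtain ⟨d, hd⟩ := hdC
    have heK : k * p ^ n + 1 ≤ e := by
      have : v + 1 ≤ n := hvn
      omega
    have hpe : k * p ^ n ≤ p * e := by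
      have h1 : e ≤ p * e := Nat.le_mul_of_pos_left e hp.pos
      omega
    set w2 := p * e - k * p ^ n with hw2
    have hw2' : p * e = k * r + k * s + w2 := by
      have : k * r + k * s = k * p ^ n := by rw [← Nat.mul_add, hrs]
      omega
    have expand : x ^ i * y ^ j * (M.choose i : L) =
        (x ^ p ^ n) ^ q * (y ^ p ^ n) ^ t * (d : L) * c ^ e * u ^ w2 *
          ((u ^ k * x) ^ r * (u ^ k * y) ^ s) := by
      rw [hd]
      push_cast
      rw [hpc, mul_pow (u ^ p) c e, ← pow_mul u p e, hw2']
      conv_lhs => rw [hiqr, hjts]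
      rw [pow_add x, pow_add y, pow_mul x, pow_mul y, pow_add u, pow_add u,
        mul_pow (u ^ k) x r, mul_pow (u ^ k) y s, ← pow_mul u k r, ← pow_mul u k s]
      ring
    rw [expand]
    refine Subring.mul_mem _ (Subring.mul_mem _ (Subring.mul_mem _ (Subring.mul_mem _
      (Subring.mul_mem _ (Subring.pow_mem _ hx q) (Subring.pow_mem _ hy t))
      (natCast_mem R _)) (Subring.pow_mem _ hc e)) (Subring.pow_mem _ hu w2))
      (Subring.mul_mem _ (Subring.pow_mem _ hux r) (Subring.pow_mem _ huy s))

lemma aux_pow_mono {L : Type*} [CommRing L] (R : Subring L) (x : L) (p : ℕ) {n m : ℕ}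
    (h : n ≤ m) (hx : x ^ p ^ n ∈ R) : x ^ p ^ m ∈ R := by
  obtain ⟨d, hd⟩ := pow_dvd_pow p h
  rw [hd, pow_mul]
  exact Subring.pow_mem _ hx d

/-- **The `p`-closure of `A` in `A[1/π]`.**
Let `A` contain a non-zerodivisor `π` with `π^p ∣ p`.  Then
`R = {x ∈ A[1/π] : ∃ n ≥ 0, x^{pⁿ} ∈ A}` is a subring of `A[1/π]`, it contains the image
of `A`, it is `p`-closed in `A[1/π]`, and it is the smallest `p`-closed subring of
`A[1/π]` containing `A`. -/
theorem statement10 (p : ℕ) [Fact p.Prime] {A : Type} [CommRing A] (π : A)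
    (hπ : ∀ a : A, π * a = 0 → a = 0) (hdvd : π ^ p ∣ (p : A)) :
    (∃ S : Subring (Localization.Away π), (S : Set (Localization.Away π)) =
        pPowerClosure p π) ∧
    Set.range (algebraMap A (Localization.Away π)) ⊆ pPowerClosure p π ∧
    (∀ x : Localization.Away π, x ^ p ∈ pPowerClosure p π → x ∈ pPowerClosure p π) ∧
    (∀ T : Subring (Localization.Away π),
      (∀ a : A, algebraMap A (Localization.Away π) a ∈ T) →
      (∀ x : Localization.Away π, x ^ p ∈ T → x ∈ T) →
      pPowerClosure p π ⊆ T) := by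
  have hp : p.Prime := Fact.out
  set L := Localization.Away π
  set φ := algebraMap A L with hφ
  set R : Subring L := φ.range with hR
  have hu : φ π ∈ R := ⟨π, rfl⟩
  obtain ⟨c₀, hc₀⟩ := hdvd
  have hpc : (p : L) = (φ π) ^ p * φ c₀ := by
    rw [← map_pow, ← map_mul, ← hc₀, map_natCast]
  -- every element has a power of φ π multiple in R
  have hloc : ∀ x : L, ∃ k : ℕ, (φ π) ^ k * x ∈ R := by
    intro x
    obtain ⟨⟨a, s⟩, hs⟩ := IsLocalization.surj (Submonoid.powers π) x
    obtain ⟨k, hk⟩ := s.2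
    refine ⟨k, ⟨a, ?_⟩⟩
    rw [← hs]
    simp only [hφ]
    rw [mul_comm, ← map_pow]
    congr 1
    exact congrArg _ hk.symm
  have hadd : ∀ x y : L, x ∈ pPowerClosure p π → y ∈ pPowerClosure p π →
      x + y ∈ pPowerClosure p π := by
    rintro x y ⟨n₁, hx⟩ ⟨n₂, hy⟩
    obtain ⟨k₁, hk₁⟩ := hloc x
    obtain ⟨k₂, hk₂⟩ := hloc y
    set n := max n₁ n₂
    set k := max k₁ k₂
    have hx' : x ^ p ^ n ∈ R := aux_pow_mono R x p (le_max_left _ _) hx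
    have hy' : y ^ p ^ n ∈ R := aux_pow_mono R y p (le_max_right _ _) hy
    have hkx : (φ π) ^ k * x ∈ R := by
      have : (φ π) ^ k = (φ π) ^ (k - k₁) * (φ π) ^ k₁ := by
        rw [← pow_add]; congr 1; omega
      rw [this, mul_assoc]
      exact Subring.mul_mem _ (Subring.pow_mem _ hu _) hk₁
    have hky : (φ π) ^ k * y ∈ R := by
      have : (φ π) ^ k = (φ π) ^ (k - k₂) * (φ π) ^ k₂ := by
        rw [← pow_add]; congr 1; omega
      rw [this, mul_assoc]
      exact Subring.mul_mem _ (Subring.pow_mem _ hu _) hk₂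
    exact ⟨n + k * p ^ n,
      aux_key R (φ π) (φ c₀) x y hu ⟨c₀, rfl⟩ hp hpc n k hx' hy' hkx hky⟩
  refine ⟨?_, ?_, ?_, ?_⟩
  · refine ⟨{ carrier := pPowerClosure p π
              zero_mem' := ⟨0, by simpa using ⟨0, map_zero _⟩⟩
              one_mem' := ⟨0, by simpa using ⟨1, map_one _⟩⟩
              add_mem' := fun hx hy => hadd _ _ hx hy
              mul_mem' := ?_
              neg_mem' := ?_ }, rfl⟩
    · rintro a b ⟨n₁, ha⟩ ⟨n₂, hb⟩
      refine ⟨n₁ + n₂, ?_⟩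
      have : (a * b) ^ p ^ (n₁ + n₂) = (a ^ p ^ n₁) ^ p ^ n₂ * (b ^ p ^ n₂) ^ p ^ n₁ := by
        rw [mul_pow, ← pow_mul, ← pow_mul, ← pow_add, ← pow_add, Nat.add_comm n₂ n₁]
      rw [this]
      exact Subring.mul_mem _ (Subring.pow_mem _ ha _) (Subring.pow_mem _ hb _)
    · rintro a ⟨n₁, ha⟩
      refine ⟨n₁, ?_⟩
      have : (-a) ^ p ^ n₁ = (-1) ^ p ^ n₁ * a ^ p ^ n₁ := by
        rw [← neg_one_mul, mul_pow]
      rw [this]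
      exact Subring.mul_mem _ (Subring.pow_mem _ (Subring.neg_mem _ (Subring.one_mem _)) _) ha
  · rintro x ⟨a, ha⟩
    exact ⟨0, by rw [pow_zero, pow_one]; exact ⟨a, ha⟩⟩
  · rintro x ⟨n₁, hn⟩
    refine ⟨n₁ + 1, ?_⟩
    rw [pow_succ', pow_mul]
    exact hn
  · intro T hT1 hT2 x hx
    obtain ⟨n₁, hn⟩ := hx
    induction n₁ generalizing x with
    | zero =>
      rw [pow_zero, pow_one] at hn
      obtain ⟨a, ha⟩ := hn
      exact ha ▸ hT1 a
    | succ m ih =>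
      apply hT2
      apply ih
      rwa [pow_succ', pow_mul] at hn
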